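/- Fix q ∈ (1, M+1). There exist constants C₁, C₂ > 0 such that for all sequences c, d ∈ 𝐔_q: C₁·ρ(c, d)^{log q} ≤ |π_q(c) − π_q(d)| ≤ C₂·ρ(c, d)^{log q}, where the logarithm is taken to base M+1. -/
import Mathlib


open scoped ENNReal NNReal Classical

namespace Expansions

/-- Digit sequences over the alphabet `{0,1,…,M}`; index `i : ℕ` represents the
`(i+1)`-st digit `d_{i+1}` of the paper. -/
abbrev Digits (M : ℕ) := ℕ → Fin (M + 1)

/-- `π_q((d_i)) = Σ_{i≥1} d_i / q^i`. -/
noncomputable def piQ (M : ℕ) (q : ℝ) (d : Digits M) : ℝ :=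
  ∑' i : ℕ, (d i : ℝ) / q ^ (i + 1)

/-- `𝒰_q` : the set of real numbers having a unique `q`-expansion. -/
def Uq (M : ℕ) (q : ℝ) : Set ℝ := {x | ∃! d : Digits M, piQ M q d = x}

/-- `𝐔_q` : the set of sequences that are the unique `q`-expansion of their value. -/
def UqSym (M : ℕ) (q : ℝ) : Set (Digits M) :=
  {d | ∀ e : Digits M, piQ M q e = piQ M q d → e = d}

/-- `𝒰(x)` : the set of univoque bases of `x`. -/
def Ubases (M : ℕ) (x : ℝ) : Set ℝ :=
  {q | q ∈ Set.Ioc (1 : ℝ) ((M : ℝ) + 1) ∧ x ∈ Uq M q}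

/-- `q_x = min{M+1, 1+M/x}`. -/
noncomputable def qx (M : ℕ) (x : ℝ) : ℝ := min ((M : ℝ) + 1) (1 + (M : ℝ) / x)

/-- Strict lexicographic order on digit sequences. -/
def lexLt {M : ℕ} (c d : Digits M) : Prop := ∃ n, (∀ i < n, c i = d i) ∧ c n < d n

def lexLe {M : ℕ} (c d : Digits M) : Prop := c = d ∨ lexLt c d

/-- The sequence ends with `0^∞`. -/
def EndsInZero {M : ℕ} (d : Digits M) : Prop := ∃ N, ∀ n ≥ N, d n = 0

/-- `d` is the quasi-greedy `q`-expansion of `x`: the lexicographically largest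
`q`-expansion of `x` not ending with `0^∞`. -/
def IsQuasiGreedy (M : ℕ) (q x : ℝ) (d : Digits M) : Prop :=
  piQ M q d = x ∧ ¬ EndsInZero d ∧
    ∀ e : Digits M, piQ M q e = x → ¬ EndsInZero e → lexLe e d

/-- `Φ_x(q)`: the quasi-greedy `q`-expansion of `x` (junk value if none exists). -/
noncomputable def Phi (M : ℕ) (x q : ℝ) : Digits M :=
  if h : ∃ d : Digits M, IsQuasiGreedy M q x d then h.choose else fun _ => 0

/-- `𝐔(x) = {Φ_x(q) : q ∈ 𝒰(x)}`. -/
def UxSym (M : ℕ) (x : ℝ) : Set (Digits M) := (Phi M x) '' (Ubases M x)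

/-- `ρ((c_i),(d_i)) = (M+1)^{-inf{i ≥ 1 : c_i ≠ d_i}}` (our index `n` represents the
`(n+1)`-st digit, whence the exponent `-(n+1)`); `ρ(c,c) = 0`. -/
noncomputable def rho (M : ℕ) (c d : Digits M) : ℝ :=
  if c = d then 0
  else ((M : ℝ) + 1) ^ (-(((sInf {i | c i ≠ d i} : ℕ) : ℤ) + 1))

/-- Diameter of a set with respect to a distance function, valued in `ℝ≥0∞`. -/
noncomputable def gdiam {X : Type*} (dist : X → X → ℝ) (A : Set X) : ℝ≥0∞ :=
  ⨆ x ∈ A, ⨆ y ∈ A, ENNReal.ofReal (dist x y)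

/-- The `s`-dimensional Hausdorff outer measure with respect to a distance function:
`lim_{δ→0⁺} inf {Σ diam(C n)^s : A ⊆ ⋃ C n, diam (C n) ≤ δ}`. -/
noncomputable def gHMeasure {X : Type*} (dist : X → X → ℝ) (s : ℝ) (A : Set X) : ℝ≥0∞ :=
  ⨆ (δ : ℝ) (_ : 0 < δ),
    ⨅ (C : ℕ → Set X) (_ : A ⊆ ⋃ n, C n)
      (_ : ∀ n, gdiam dist (C n) ≤ ENNReal.ofReal δ),
      ∑' n, gdiam dist (C n) ^ s

/-- Hausdorff dimension with respect to a distance function. -/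
noncomputable def gdimH {X : Type*} (dist : X → X → ℝ) (A : Set X) : ℝ≥0∞ :=
  ⨆ (s : ℝ≥0) (_ : gHMeasure dist (s : ℝ) A = ⊤), (s : ℝ≥0∞)

/-- The generalized golden ratio `q_G`. -/
noncomputable def qG (M : ℕ) : ℝ :=
  if M % 2 = 0 then ((M / 2 : ℕ) : ℝ) + 1
  else (((M / 2 : ℕ) : ℝ) + 1 +
    Real.sqrt (((M / 2 : ℕ) : ℝ) ^ 2 + 6 * ((M / 2 : ℕ) : ℝ) + 5)) / 2

/-- `x_G = M/(q_G - 1)`. -/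
noncomputable def xG (M : ℕ) : ℝ := (M : ℝ) / (qG M - 1)

/-- The Komornik–Loreti constant `q_KL = min 𝒰(1)`. -/
noncomputable def qKL (M : ℕ) : ℝ := sInf (Ubases M 1)

/-- `x_KL = M/(q_KL - 1)`. -/
noncomputable def xKL (M : ℕ) : ℝ := (M : ℝ) / (qKL M - 1)

/-- `X_iso`: the set of `x > 0` such that `𝒰(x)` contains an isolated point. -/
def Xiso (M : ℕ) : Set ℝ :=
  {x | 0 < x ∧ ∃ q ∈ Ubases M x, ∃ ε > 0, Ubases M x ∩ Set.Ioo (q - ε) (q + ε) = {q}}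

/-- The bifurcation set `𝒱 = {q ∈ (1,M+1] : 𝐔_r ≠ 𝐔_q for all r > q}`. -/
def Vset (M : ℕ) : Set ℝ :=
  {q | q ∈ Set.Ioc (1 : ℝ) ((M : ℝ) + 1) ∧
    ∀ r ∈ Set.Ioc (1 : ℝ) ((M : ℝ) + 1), q < r → UqSym M r ≠ UqSym M q}

/-- The Thue–Morse sequence `τ_i` = parity of the binary digit sum of `i`. -/
def tm (i : ℕ) : ℕ := (Nat.digits 2 i).sum % 2


section Helpers

variable {M : ℕ} {q : ℝ}

def shift {M : ℕ} (c : Digits M) : Digits M := fun i => c (i + 1)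

def consd {M : ℕ} (a : Fin (M + 1)) (c : Digits M) : Digits M :=
  fun i => match i with
  | 0 => a
  | j + 1 => c j

lemma summable_aux (hq1 : 1 < q) (f : ℕ → ℝ) (hf : ∀ i, 0 ≤ f i ∧ f i ≤ M) :
    Summable (fun i : ℕ => f i / q ^ (i + 1)) := by
  have hq0 : 0 < q := lt_trans one_pos hq1
  have h0 : (0:ℝ) ≤ q⁻¹ := by positivity
  have h1 : q⁻¹ < 1 := inv_lt_one_of_one_lt₀ hq1
  have hg : Summable (fun i : ℕ => (M : ℝ) * q⁻¹ * q⁻¹ ^ i) :=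
    (summable_geometric_of_lt_one h0 h1).mul_left _
  refine Summable.of_nonneg_of_le (fun i => ?_) (fun i => ?_) hg
  · exact div_nonneg (hf i).1 (by positivity)
  · rw [div_eq_mul_inv, ← inv_pow, pow_succ']
    rw [mul_assoc]
    exact mul_le_mul_of_nonneg_right (hf i).2 (by positivity)

lemma summable_piQ (hq1 : 1 < q) (d : Digits M) :
    Summable (fun i : ℕ => (d i : ℝ) / q ^ (i + 1)) :=
  summable_aux hq1 _ (fun i => ⟨by positivity, by exact_mod_cast Nat.cast_le.2 (Fin.is_le (d i))⟩)

lemma piQ_nonneg (hq1 : 1 < q) (d : Digits M) : 0 ≤ piQ M q d :=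
  tsum_nonneg (fun i => by positivity)

lemma tsum_geom (hq1 : 1 < q) : ∑' i : ℕ, (M : ℝ) / q ^ (i + 1) = M / (q - 1) := by
  have hq0 : 0 < q := lt_trans one_pos hq1
  have h0 : (0:ℝ) ≤ q⁻¹ := by positivity
  have h1 : q⁻¹ < 1 := inv_lt_one_of_one_lt₀ hq1
  have : (fun i : ℕ => (M : ℝ) / q ^ (i + 1)) = fun i : ℕ => (M : ℝ) * q⁻¹ * q⁻¹ ^ i := by
    funext i
    rw [div_eq_mul_inv, ← inv_pow, pow_succ']
    ring
  rw [this, tsum_mul_left, tsum_geometric_of_lt_one h0 h1]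
  field_simp

lemma piQ_le (hq1 : 1 < q) (d : Digits M) : piQ M q d ≤ M / (q - 1) := by
  rw [← tsum_geom (M := M) hq1]
  refine Summable.tsum_le_tsum (fun i => ?_) (summable_piQ hq1 d)
    (summable_aux hq1 _ (fun i => ⟨by positivity, le_refl _⟩))
  have : ((d i : ℕ) : ℝ) ≤ M := by exact_mod_cast Fin.is_le (d i)
  gcongr

lemma piQ_cons (hq1 : 1 < q) (a : Fin (M + 1)) (e : Digits M) :
    piQ M q (consd a e) = (a : ℝ) / q + piQ M q e / q := by
  have hq0 : 0 < q := lt_trans one_pos hq1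
  have hs := summable_piQ hq1 (consd a e)
  rw [piQ, Summable.tsum_eq_zero_add hs]
  have h1 : ∑' i : ℕ, ((consd a e (i + 1) : ℝ)) / q ^ (i + 1 + 1)
      = ∑' i : ℕ, ((e i : ℝ) / q ^ (i + 1)) * q⁻¹ := by
    congr 1; funext i
    show ((e i : ℝ)) / q ^ (i + 1 + 1) = _
    rw [pow_succ]
    field_simp
  rw [h1, tsum_mul_right]
  have h2 : ((consd a e 0 : ℕ) : ℝ) = (a : ℝ) := rfl
  simp only [piQ, h2, pow_one]
  ring

lemma consd_shift (c : Digits M) : consd (c 0) (shift c) = c := by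
  funext i
  cases i with
  | zero => rfl
  | succ j => rfl

lemma piQ_shift (hq1 : 1 < q) (c : Digits M) :
    piQ M q c = (c 0 : ℝ) / q + piQ M q (shift c) / q := by
  conv_lhs => rw [← consd_shift c]
  exact piQ_cons hq1 _ _

def shiftn {M : ℕ} (n : ℕ) (c : Digits M) : Digits M := fun i => c (i + n)

lemma shiftn_zero (c : Digits M) : shiftn 0 c = c := rfl

lemma shiftn_succ (n : ℕ) (c : Digits M) : shiftn (n + 1) c = shiftn n (shift c) := by
  funext i
  show c (i + (n + 1)) = c (i + n + 1)
  congr 1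

lemma shift_mem_UqSym (hq1 : 1 < q) {c : Digits M} (hc : c ∈ UqSym M q) :
    shift c ∈ UqSym M q := by
  intro e he
  have h : piQ M q (consd (c 0) e) = piQ M q c := by
    rw [piQ_cons hq1, he, ← piQ_shift hq1]
  have := hc _ h
  funext i
  have : consd (c 0) e (i + 1) = c (i + 1) := by rw [this]
  exact this

lemma shiftn_mem_UqSym (hq1 : 1 < q) (n : ℕ) {c : Digits M} (hc : c ∈ UqSym M q) :
    shiftn n c ∈ UqSym M q := by
  induction n generalizing c with
  | zero => exact hc
  | succ n ih => rw [shiftn_succ]; exact ih (shift_mem_UqSym hq1 hc)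

lemma piQ_sub_shiftn (hq1 : 1 < q) (n : ℕ) (c d : Digits M)
    (h : ∀ i < n, c i = d i) :
    piQ M q c - piQ M q d = (piQ M q (shiftn n c) - piQ M q (shiftn n d)) / q ^ n := by
  induction n generalizing c d with
  | zero => simp [shiftn_zero]
  | succ n ih =>
    have h0 : c 0 = d 0 := h 0 (Nat.succ_pos n)
    have hrec := ih (shift c) (shift d) (fun i hi => h (i + 1) (by omega))
    rw [piQ_shift hq1 c, piQ_shift hq1 d, h0, shiftn_succ, shiftn_succ]
    rw [show ((d 0 : ℕ):ℝ)/q + piQ M q (shift c)/q - (((d 0 : ℕ):ℝ)/q + piQ M q (shift d)/q)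
        = (piQ M q (shift c) - piQ M q (shift d))/q from by ring, hrec, div_div, ← pow_succ]


noncomputable def grem (M : ℕ) (q : ℝ) (y : ℝ) : ℕ → ℝ
  | 0 => y
  | n + 1 => q * grem M q y n - ↑(min M ⌊q * grem M q y n⌋₊)

noncomputable def gdig (M : ℕ) (q : ℝ) (y : ℝ) (n : ℕ) : ℕ := min M ⌊q * grem M q y n⌋₊

lemma gdig_le (M : ℕ) (q y : ℝ) (n : ℕ) : gdig M q y n ≤ M := min_le_left _ _

lemma grem_succ (M : ℕ) (q y : ℝ) (n : ℕ) :
    grem M q y (n + 1) = q * grem M q y n - (gdig M q y n : ℝ) := rfl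

lemma grem_invariant (hq1 : 1 < q) (hqM : q < M + 1) {y : ℝ}
    (hy0 : 0 ≤ y) (hy1 : y ≤ M / (q - 1)) (n : ℕ) :
    0 ≤ grem M q y n ∧ grem M q y n ≤ M / (q - 1) := by
  induction n with
  | zero => exact ⟨hy0, hy1⟩
  | succ n ih =>
    obtain ⟨h0, h1⟩ := ih
    have hq0 : 0 < q := lt_trans one_pos hq1
    have hq1' : 0 < q - 1 := by linarith
    have hM1 : 1 ≤ (M : ℝ) / (q - 1) := by rw [le_div_iff₀ hq1']; linarith
    set r := grem M q y n with hr
    have ht0 : 0 ≤ q * r := by positivity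
    have hfl : (⌊q * r⌋₊ : ℝ) ≤ q * r := Nat.floor_le ht0
    rw [grem_succ, gdig]
    rcases le_or_gt ⌊q * r⌋₊ M with h | h
    · rw [min_eq_right h]
      have hlt : q * r < ⌊q * r⌋₊ + 1 := Nat.lt_floor_add_one _
      exact ⟨by linarith, by linarith⟩
    · rw [min_eq_left (le_of_lt h)]
      have h2 : (M : ℝ) + 1 ≤ (⌊q * r⌋₊ : ℝ) := by exact_mod_cast Nat.succ_le_of_lt h
      have h3 : q * r ≤ q * ((M : ℝ) / (q - 1)) :=
        mul_le_mul_of_nonneg_left h1 (le_of_lt hq0)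
      have h4 : q * ((M : ℝ) / (q - 1)) - M = (M : ℝ) / (q - 1) := by
        field_simp
        ring
      exact ⟨by linarith, by linarith⟩

lemma grem_eq (hq1 : 1 < q) (y : ℝ) (n : ℕ) :
    y = (∑ i ∈ Finset.range n, (gdig M q y i : ℝ) / q ^ (i + 1)) + grem M q y n / q ^ n := by
  have hq0 : (0:ℝ) < q := lt_trans one_pos hq1
  induction n with
  | zero => simp [grem]
  | succ n ih =>
    have h2 : grem M q y n / q ^ n
        = (gdig M q y n : ℝ) / q ^ (n + 1)
          + (q * grem M q y n - (gdig M q y n : ℝ)) / q ^ (n + 1) := by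
      rw [pow_succ]
      field_simp
      ring
    rw [Finset.sum_range_succ, grem_succ]
    linarith [ih, h2]

lemma exists_expansion (hq1 : 1 < q) (hqM : q < (M : ℝ) + 1) {y : ℝ}
    (hy0 : 0 ≤ y) (hy1 : y ≤ M / (q - 1)) :
    ∃ e : Digits M, piQ M q e = y := by
  have hq0 : (0:ℝ) < q := lt_trans one_pos hq1
  have hq1' : (0:ℝ) < q - 1 := by linarith
  refine ⟨fun n => ⟨gdig M q y n, Nat.lt_succ_of_le (gdig_le M q y n)⟩, ?_⟩
  have hs : Summable (fun i : ℕ => (gdig M q y i : ℝ) / q ^ (i + 1)) :=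
    summable_aux hq1 _ (fun i => ⟨by positivity, by exact_mod_cast gdig_le M q y i⟩)
  have htail : Filter.Tendsto (fun n => grem M q y n / q ^ n) Filter.atTop (nhds 0) := by
    have hb : Filter.Tendsto (fun n : ℕ => ((M : ℝ) / (q - 1)) * q⁻¹ ^ n)
        Filter.atTop (nhds 0) := by
      have := (tendsto_pow_atTop_nhds_zero_of_lt_one (by positivity : (0:ℝ) ≤ q⁻¹)
        (inv_lt_one_of_one_lt₀ hq1)).const_mul ((M : ℝ) / (q - 1))
      simpa using this
    refine squeeze_zero (fun n => ?_) (fun n => ?_) hb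
    · exact div_nonneg (grem_invariant hq1 hqM hy0 hy1 n).1 (by positivity)
    · rw [div_eq_mul_inv, ← inv_pow]
      exact mul_le_mul_of_nonneg_right (grem_invariant hq1 hqM hy0 hy1 n).2 (by positivity)
  have hlim : Filter.Tendsto
      (fun n => ∑ i ∈ Finset.range n, (gdig M q y i : ℝ) / q ^ (i + 1))
      Filter.atTop (nhds y) := by
    have heq : ∀ n : ℕ, ∑ i ∈ Finset.range n, (gdig M q y i : ℝ) / q ^ (i + 1)
        = y - grem M q y n / q ^ n := fun n => by linarith [grem_eq (M := M) hq1 y n]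
    rw [funext heq]
    simpa using tendsto_const_nhds.sub htail
  show (∑' i : ℕ, ((gdig M q y i : ℕ) : ℝ) / q ^ (i + 1)) = y
  exact tendsto_nhds_unique hs.hasSum.tendsto_sum_nat hlim


lemma greedy_tail (hq1 : 1 < q) (hqM : q < (M : ℝ) + 1) {c : Digits M}
    (hc : c ∈ UqSym M q) (h0 : (c 0 : ℕ) < M) : piQ M q (shift c) < 1 := by
  by_contra h
  push_neg at h
  have hle := piQ_le hq1 (shift c)
  obtain ⟨e, he⟩ := exists_expansion hq1 hqM (y := piQ M q (shift c) - 1)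
    (by linarith) (by linarith)
  set a : Fin (M + 1) := ⟨(c 0 : ℕ) + 1, by omega⟩ with ha
  have hav : ((a : ℕ) : ℝ) = ((c 0 : ℕ) : ℝ) + 1 := by rw [ha]; push_cast; rfl
  have key : piQ M q (consd a e) = piQ M q c := by
    rw [piQ_cons hq1, he, piQ_shift hq1 c, hav]
    ring
  have heq := hc _ key
  have hv : (c 0 : ℕ) + 1 = (c 0 : ℕ) := congrArg Fin.val (congrFun heq 0)
  omega

lemma lazy_tail (hq1 : 1 < q) (hqM : q < (M : ℝ) + 1) {c : Digits M}
    (hc : c ∈ UqSym M q) (h0 : 0 < (c 0 : ℕ)) :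
    (M : ℝ) / (q - 1) - 1 < piQ M q (shift c) := by
  by_contra h
  push_neg at h
  have hge := piQ_nonneg hq1 (shift c)
  obtain ⟨e, he⟩ := exists_expansion hq1 hqM (y := piQ M q (shift c) + 1)
    (by linarith) (by linarith)
  set a : Fin (M + 1) := ⟨(c 0 : ℕ) - 1, by omega⟩ with ha
  have hav : ((a : ℕ) : ℝ) = ((c 0 : ℕ) : ℝ) - 1 := by
    rw [ha]
    show (((c 0 : ℕ) - 1 : ℕ) : ℝ) = _
    rw [Nat.cast_sub h0, Nat.cast_one]
  have key : piQ M q (consd a e) = piQ M q c := by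
    rw [piQ_cons hq1, he, piQ_shift hq1 c, hav]
    ring
  have heq := hc _ key
  have hv : (c 0 : ℕ) - 1 = (c 0 : ℕ) := congrArg Fin.val (congrFun heq 0)
  omega

lemma gap (hq1 : 1 < q) (hqM : q < (M : ℝ) + 1) {c d : Digits M}
    (hc : c ∈ UqSym M q) (hd : d ∈ UqSym M q) (h : (c 0 : ℕ) < (d 0 : ℕ)) :
    ((M : ℝ) / (q - 1) - 1) / q ≤ piQ M q d - piQ M q c := by
  have hq0 : (0:ℝ) < q := lt_trans one_pos hq1
  have hcM : (c 0 : ℕ) < M := lt_of_lt_of_le h (Fin.is_le _)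
  have h1 : piQ M q (shift c) < 1 := greedy_tail hq1 hqM hc hcM
  have h2 : (M : ℝ) / (q - 1) - 1 < piQ M q (shift d) :=
    lazy_tail hq1 hqM hd (Nat.pos_of_ne_zero (by omega))
  have h3 : ((c 0 : ℕ) : ℝ) + 1 ≤ ((d 0 : ℕ) : ℝ) := by exact_mod_cast h
  rw [piQ_shift hq1 c, piQ_shift hq1 d]
  have key : ((M : ℝ) / (q - 1) - 1) / q
      ≤ (((d 0 : ℕ) : ℝ) - ((c 0 : ℕ) : ℝ) + (piQ M q (shift d) - piQ M q (shift c))) / q := by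
    gcongr
    linarith
  calc ((M : ℝ) / (q - 1) - 1) / q
      ≤ (((d 0 : ℕ) : ℝ) - ((c 0 : ℕ) : ℝ) + (piQ M q (shift d) - piQ M q (shift c))) / q := key
    _ = ((d 0 : ℕ) : ℝ) / q + piQ M q (shift d) / q
        - (((c 0 : ℕ) : ℝ) / q + piQ M q (shift c) / q) := by ring

lemma rho_pow_logb (hM : 0 < M) (hq0 : 0 < q) (n : ℕ) :
    ((((M : ℝ) + 1)) ^ (-((n : ℤ) + 1))) ^ Real.logb ((M : ℝ) + 1) q
      = (q ^ (n + 1))⁻¹ := by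
  have hM1 : (1:ℝ) ≤ (M : ℝ) := by exact_mod_cast hM
  have hb1 : (1:ℝ) < (M : ℝ) + 1 := by linarith
  have hb0 : (0:ℝ) < (M : ℝ) + 1 := by linarith
  rw [← Real.rpow_intCast ((M : ℝ) + 1) (-((n : ℤ) + 1)),
      ← Real.rpow_mul (le_of_lt hb0), mul_comm,
      Real.rpow_mul (le_of_lt hb0),
      Real.rpow_logb hb0 (ne_of_gt hb1) hq0,
      Real.rpow_intCast, zpow_neg]
  congr 1

end Helpers

/-- Lemma: for fixed `q ∈ (1, M+1)` there are constants `C₁, C₂ > 0` such that for all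
`c, d ∈ 𝐔_q`, `C₁ ρ(c,d)^{log q} ≤ |π_q(c) - π_q(d)| ≤ C₂ ρ(c,d)^{log q}`, with the
logarithm taken to base `M+1`. -/
theorem piQ_biHolder_on_UqSym (M : ℕ) (hM : 0 < M) (q : ℝ)
    (hq : q ∈ Set.Ioo (1 : ℝ) ((M : ℝ) + 1)) :
    ∃ C₁ > (0 : ℝ), ∃ C₂ > (0 : ℝ),
      ∀ c ∈ UqSym M q, ∀ d ∈ UqSym M q,
        C₁ * rho M c d ^ Real.logb ((M : ℝ) + 1) q ≤ |piQ M q c - piQ M q d| ∧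
        |piQ M q c - piQ M q d| ≤ C₂ * rho M c d ^ Real.logb ((M : ℝ) + 1) q := by

  obtain ⟨hq1, hqM⟩ := hq
  have hq0 : (0:ℝ) < q := lt_trans one_pos hq1
  have hq1' : (0:ℝ) < q - 1 := by linarith
  have hM1 : (1:ℝ) ≤ (M : ℝ) := by exact_mod_cast hM
  have hδ0 : 0 < (M : ℝ) / (q - 1) - 1 := by
    rw [sub_pos, lt_div_iff₀ hq1']
    linarith
  refine ⟨(M : ℝ) / (q - 1) - 1, hδ0, q * ((M : ℝ) / (q - 1)), by positivity,
    fun c hc d hd => ?_⟩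
  by_cases hcd : c = d
  · subst hcd
    have hlogb : Real.logb ((M : ℝ) + 1) q ≠ 0 :=
      ne_of_gt (Real.logb_pos (by linarith) hq1)
    simp [rho, Real.zero_rpow hlogb]
  · have hne : {i | c i ≠ d i}.Nonempty := Function.ne_iff.mp hcd
    set n := sInf {i | c i ≠ d i} with hn
    have hmem : c n ≠ d n := Nat.sInf_mem hne
    have hagree : ∀ i < n, c i = d i := fun i hi =>
      not_not.mp (Nat.notMem_of_lt_sInf hi)
    have hpow : rho M c d ^ Real.logb ((M : ℝ) + 1) q = (q ^ (n + 1))⁻¹ := by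
      simp only [rho, if_neg hcd, ← hn]
      exact rho_pow_logb hM hq0 n
    have hsub := piQ_sub_shiftn hq1 n c d hagree
    have hC := shiftn_mem_UqSym hq1 n hc
    have hD := shiftn_mem_UqSym hq1 n hd
    have hC0 : shiftn n c 0 = c n := by
      show c (0 + n) = c n
      rw [Nat.zero_add]
    have hD0 : shiftn n d 0 = d n := by
      show d (0 + n) = d n
      rw [Nat.zero_add]
    have hvalne : (shiftn n c 0 : ℕ) ≠ (shiftn n d 0 : ℕ) := by
      rw [hC0, hD0]
      exact fun h => hmem (Fin.ext h)
    have hgap : ((M : ℝ) / (q - 1) - 1) / q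
        ≤ |piQ M q (shiftn n c) - piQ M q (shiftn n d)| := by
      have hδq : 0 < ((M : ℝ) / (q - 1) - 1) / q := by positivity
      rcases lt_or_gt_of_ne hvalne with h | h
      · have := gap hq1 hqM hC hD h
        rw [abs_sub_comm, abs_of_nonneg (by linarith)]
        linarith
      · have := gap hq1 hqM hD hC h
        rw [abs_of_nonneg (by linarith)]
        linarith
    have hbd : |piQ M q (shiftn n c) - piQ M q (shiftn n d)| ≤ (M : ℝ) / (q - 1) := by
      rw [abs_le]
      constructor
      · linarith [piQ_nonneg hq1 (shiftn n c), piQ_le hq1 (shiftn n d)]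
      · linarith [piQ_nonneg hq1 (shiftn n d), piQ_le hq1 (shiftn n c)]
    have habs : |piQ M q c - piQ M q d|
        = |piQ M q (shiftn n c) - piQ M q (shiftn n d)| / q ^ n := by
      rw [hsub, abs_div, abs_of_pos (pow_pos hq0 n)]
    have key : ∀ A : ℝ, A * (q ^ (n + 1))⁻¹ = (A / q) / q ^ n := fun A => by
      rw [div_div, ← pow_succ', div_eq_mul_inv]
    constructor
    · rw [hpow, habs, key]
      gcongr
    · rw [hpow, habs, key, mul_div_cancel_left₀ _ hq0.ne']
      gcongr

end Expansions
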